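/- Let ε, C₀, z₀ ∈ ℝ. Then the function y(z) = C₀ + 30240·ε/(z + z₀)⁵ satisfies, for every z ∈ ℝ with z ≠ −z₀, the fifth-order equation ε·y'''''(z) + (1/2)·y(z)² − C₀·y(z) + (1/2)·C₀² = 0. -/

import Mathlib

private lemma aux_hasDerivAt (z₀ c : ℝ) (n : ℤ) {x : ℝ} (h : x + z₀ ≠ 0) :
    HasDerivAt (fun x : ℝ => c * (x + z₀) ^ n) (c * n * (x + z₀) ^ (n - 1)) x := by
  have h1 : HasDerivAt (fun x : ℝ => x + z₀) 1 x := (hasDerivAt_id x).add_const z₀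
  have h2 := (hasDerivAt_zpow n (x + z₀) (Or.inl h)).comp x h1
  have h3 := h2.const_mul c
  have h4 : HasDerivAt (fun x : ℝ => c * (x + z₀) ^ n) (c * (n * (x + z₀) ^ (n - 1) * 1)) x := h3
  convert h4 using 1
  ring

/-- The rational function `y(z) = C₀ + 30240ε/(z + z₀)⁵` satisfies, away from the
pole `z = −z₀`, the fifth-order equation
`εy''''' + (1/2)y² − C₀y + (1/2)C₀² = 0`. -/
theorem rational_solution_fifth_order
    (ε C₀ z₀ : ℝ) (y : ℝ → ℝ)
    (hy : ∀ z, y z = C₀ + 30240 * ε / (z + z₀) ^ 5) :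
    ∀ z : ℝ, z ≠ -z₀ →
      ε * iteratedDeriv 5 y z + (1 / 2) * (y z) ^ 2 - C₀ * y z
        + (1 / 2) * C₀ ^ 2 = 0 := by
  have hy' : y = fun x => C₀ + (30240 * ε) * (x + z₀) ^ (-5 : ℤ) := by
    funext x
    rw [hy x, div_eq_mul_inv, zpow_neg,
      show ((x + z₀) ^ (5 : ℤ)) = (x + z₀) ^ (5 : ℕ) from zpow_natCast _ 5]
  have hopen : IsOpen {x : ℝ | x + z₀ ≠ 0} :=
    isOpen_compl_singleton.preimage (by continuity)
  -- step lemma: if iteratedDeriv k y agrees with c*(x+z₀)^n on the set, then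
  -- iteratedDeriv (k+1) y agrees with c*n*(x+z₀)^(n-1) there.
  have step : ∀ (k : ℕ) (c : ℝ) (n : ℤ),
      (∀ x, x + z₀ ≠ 0 → iteratedDeriv k y x = c * (x + z₀) ^ n) →
      (∀ x, x + z₀ ≠ 0 → iteratedDeriv (k + 1) y x = (c * n) * (x + z₀) ^ (n - 1)) := by
    intro k c n hk x hx
    have hmem : {x : ℝ | x + z₀ ≠ 0} ∈ nhds x := hopen.mem_nhds hx
    have heq : iteratedDeriv k y =ᶠ[nhds x] (fun x => c * (x + z₀) ^ n) :=
      Filter.eventuallyEq_of_mem hmem hk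
    rw [iteratedDeriv_succ, heq.deriv_eq, (aux_hasDerivAt z₀ c n hx).deriv]
  have h1 : ∀ x, x + z₀ ≠ 0 → iteratedDeriv 1 y x = (30240 * ε * (-5)) * (x + z₀) ^ (-6 : ℤ) := by
    intro x hx
    rw [iteratedDeriv_one, hy']
    have := ((aux_hasDerivAt z₀ (30240 * ε) (-5) hx).const_add C₀).deriv
    rw [this]
    norm_num
  have h2 := step 1 _ _ h1
  have h3 := step 2 _ _ h2
  have h4 := step 3 _ _ h3
  have h5 := step 4 _ _ h4
  intro z hz
  have hz' : z + z₀ ≠ 0 := by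
    intro h; apply hz; linarith
  rw [show (5 : ℕ) = 4 + 1 from rfl, h5 z hz', hy z]
  have hp : (z + z₀) ^ 5 ≠ 0 := pow_ne_zero _ hz'
  have hnorm : ((-6 : ℤ) - 1 - 1 - 1 - 1) = (-10 : ℤ) := by norm_num
  rw [hnorm, zpow_neg, show ((10:ℤ) = (10:ℕ)) from rfl, zpow_natCast]
  field_simp
  ring
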